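/- Let C₁ and C₂ be two northwest monotone convex chains such that C₁ precedes C₂ (the x-coordinate of the last point of C₁ is less than the x-coordinate of the first point of C₂) and the y-coordinate of the last point of C₁ is less than the y-coordinate of the last point of C₂. Then there exist a point p₁ in C₁ and a point p₂ in C₂ such that the line through p₁ and p₂ has no point of C₁ or C₂ strictly above it (a common tangent bridge exists). -/

import Mathlib

/- Cross product test: `cross a b q > 0` means `q` is strictly above the (directed) line
through `a` and `b` (with `a.1 < b.1`). -/
def cross (a b q : ℝ × ℝ) : ℝ :=
  (b.1 - a.1) * (q.2 - a.2) - (b.2 - a.2) * (q.1 - a.1)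

/- A northwest monotone convex chain: strictly increasing x- and y-coordinates, and no
point of the chain lies strictly above the line through any two consecutive chain points. -/
def IsNWChain (l : List (ℝ × ℝ)) : Prop :=
  l.Chain' (fun a b => a.1 < b.1) ∧
  l.Chain' (fun a b => a.2 < b.2) ∧
  ∀ i, (h : i + 1 < l.length) → ∀ q ∈ l,
    cross (l[i]'(Nat.lt_of_succ_lt h)) (l[i+1]'h) q ≤ 0

private lemma chain'_le_getLast {α : Type*} {f : α → ℝ} :
    ∀ {l : List α}, l.Chain' (fun a b => f a < f b) → (hne : l ≠ []) →
      ∀ p ∈ l, f p ≤ f (l.getLast hne)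
  | [], _, hne => absurd rfl hne
  | [a], _, _ => by
      intro p hp
      simp only [List.mem_singleton] at hp
      simp [hp]
  | a :: b :: t, h, _ => by
      intro p hp
      have hab : f a < f b := (List.isChain_cons_cons.mp h).1
      have ht : (b :: t).Chain' (fun a b => f a < f b) := (List.isChain_cons_cons.mp h).2
      have ih := chain'_le_getLast ht (List.cons_ne_nil _ _)
      rw [List.getLast_cons (List.cons_ne_nil _ _)]
      rcases List.mem_cons.mp hp with rfl | hp
      · exact le_of_lt (lt_of_lt_of_le hab (ih b List.mem_cons_self))
      · exact ih p hp

private lemma chain'_head_le {α : Type*} {f : α → ℝ} :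
    ∀ {l : List α}, l.Chain' (fun a b => f a < f b) → (hne : l ≠ []) →
      ∀ p ∈ l, f (l.head hne) ≤ f p
  | [], _, hne => absurd rfl hne
  | a :: t, h, _ => by
      intro p hp
      rcases List.mem_cons.mp hp with rfl | hp
      · simp
      · rcases t with _ | ⟨b, t⟩
        · simp at hp
        · have hab : f a < f b := (List.isChain_cons_cons.mp h).1
          have ht : (b :: t).Chain' (fun a b => f a < f b) := (List.isChain_cons_cons.mp h).2
          have ih := chain'_head_le ht (List.cons_ne_nil _ _)
          have := ih p hp
          simp only [List.head_cons] at this ⊢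
          exact le_trans (le_of_lt hab) this

private lemma cont_sup' (s : Finset (ℝ × ℝ)) (hs : s.Nonempty) :
    Continuous (fun m : ℝ => s.sup' hs (fun p => p.2 - m * p.1)) := by
  induction hs using Finset.Nonempty.cons_induction with
  | singleton a =>
      simp only [Finset.sup'_singleton]
      exact continuous_const.sub (continuous_id.mul continuous_const)
  | cons a s ha hs ih =>
      simp only [Finset.sup'_cons hs]
      exact Continuous.sup (continuous_const.sub (continuous_id.mul continuous_const)) ih

/- STATEMENT 8: two northwest monotone convex chains, the first preceding the second and
with a lower last point, admit a common tangent bridge: points `p₁ ∈ C₁`, `p₂ ∈ C₂` such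
that no point of either chain is strictly above the line through `p₁` and `p₂`. -/
theorem bridge_exists (l₁ l₂ : List (ℝ × ℝ)) (h₁ : IsNWChain l₁) (h₂ : IsNWChain l₂)
    (hne₁ : l₁ ≠ []) (hne₂ : l₂ ≠ [])
    (hprec : (l₁.getLast hne₁).1 < (l₂.head hne₂).1)
    (htail : (l₁.getLast hne₁).2 < (l₂.getLast hne₂).2) :
    ∃ p₁ ∈ l₁, ∃ p₂ ∈ l₂, ∀ q, (q ∈ l₁ ∨ q ∈ l₂) → cross p₁ p₂ q ≤ 0 := by
  classical
  obtain ⟨hx₁, hy₁, -⟩ := h₁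
  obtain ⟨hx₂, hy₂, -⟩ := h₂
  -- basic chain facts
  have hX₁ : ∀ p ∈ l₁, p.1 ≤ (l₁.getLast hne₁).1 :=
    chain'_le_getLast (f := Prod.fst) hx₁ hne₁
  have hY₁ : ∀ p ∈ l₁, p.2 ≤ (l₁.getLast hne₁).2 :=
    chain'_le_getLast (f := Prod.snd) hy₁ hne₁
  have hX₂ : ∀ p ∈ l₂, (l₂.head hne₂).1 ≤ p.1 :=
    chain'_head_le (f := Prod.fst) hx₂ hne₂
  have hXX₁ : ∀ p ∈ l₁, (l₁.head hne₁).1 ≤ p.1 :=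
    chain'_head_le (f := Prod.fst) hx₁ hne₁
  -- finsets
  set s₁ : Finset (ℝ × ℝ) := l₁.toFinset with hs₁def
  set s₂ : Finset (ℝ × ℝ) := l₂.toFinset with hs₂def
  have hs₁ : s₁.Nonempty := ⟨l₁.head hne₁, by simp [hs₁def, List.head_mem]⟩
  have hs₂ : s₂.Nonempty := ⟨l₂.head hne₂, by simp [hs₂def, List.head_mem]⟩
  set F₁ : ℝ → ℝ := fun m => s₁.sup' hs₁ (fun p => p.2 - m * p.1) with hF₁
  set F₂ : ℝ → ℝ := fun m => s₂.sup' hs₂ (fun p => p.2 - m * p.1) with hF₂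
  have hmem₁ : ∀ p, p ∈ s₁ ↔ p ∈ l₁ := by intro p; simp [hs₁def]
  have hmem₂ : ∀ p, p ∈ s₂ ↔ p ∈ l₂ := by intro p; simp [hs₂def]
  -- D 0 < 0
  have hD0 : F₁ 0 < F₂ 0 := by
    have h1 : F₁ 0 ≤ (l₁.getLast hne₁).2 := by
      apply Finset.sup'_le
      intro p hp
      have := hY₁ p ((hmem₁ p).mp hp)
      simpa using this
    have h2 : (l₂.getLast hne₂).2 ≤ F₂ 0 := by
      have hm : l₂.getLast hne₂ ∈ s₂ := (hmem₂ _).mpr (List.getLast_mem hne₂)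
      calc (l₂.getLast hne₂).2 = (l₂.getLast hne₂).2 - 0 * (l₂.getLast hne₂).1 := by ring
      _ ≤ F₂ 0 := Finset.le_sup' (fun p : ℝ × ℝ => p.2 - 0 * p.1) hm
    linarith
  -- choose M with D M > 0
  set a := l₁.head hne₁ with ha
  have haδ : 0 < (l₂.head hne₂).1 - a.1 := by
    have := hXX₁ (l₁.getLast hne₁) (List.getLast_mem hne₁)
    -- a.1 ≤ last₁.1 < head₂.1
    have h' := hX₁ a (List.head_mem hne₁)
    linarith [hprec]
  set δ := (l₂.head hne₂).1 - a.1 with hδ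
  set K := s₂.sup' hs₂ (fun p : ℝ × ℝ => p.2) with hK
  set M := max 0 ((K - a.2 + 1) / δ) with hM
  have hM0 : 0 ≤ M := le_max_left _ _
  have hDM : F₂ M < F₁ M := by
    have hav : a.2 - M * a.1 ≤ F₁ M :=
      Finset.le_sup' (fun p : ℝ × ℝ => p.2 - M * p.1) ((hmem₁ a).mpr (List.head_mem hne₁))
    have : F₂ M < a.2 - M * a.1 := by
      rw [hF₂, Finset.sup'_lt_iff]
      intro p hp
      have hpx : δ ≤ p.1 - a.1 := by
        have := hX₂ p ((hmem₂ p).mp hp)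
        simp only [hδ]
        linarith
      have hpy : p.2 ≤ K := Finset.le_sup' (fun p : ℝ × ℝ => p.2) hp
      have hMδ : K - a.2 + 1 ≤ M * δ := by
        have h1 : (K - a.2 + 1) / δ ≤ M := le_max_right _ _
        calc K - a.2 + 1 = ((K - a.2 + 1) / δ) * δ := by field_simp
        _ ≤ M * δ := by nlinarith [haδ]
      nlinarith [mul_le_mul_of_nonneg_left hpx hM0]
    linarith
  -- IVT
  have hcont : ContinuousOn (fun m => F₁ m - F₂ m) (Set.Icc 0 M) :=
    ((cont_sup' s₁ hs₁).sub (cont_sup' s₂ hs₂)).continuousOn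
  have hiv := intermediate_value_Icc hM0 hcont
  have h0mem : (0 : ℝ) ∈ Set.Icc (F₁ 0 - F₂ 0) (F₁ M - F₂ M) := by
    constructor <;> [linarith; linarith]
  obtain ⟨m, -, hm⟩ := hiv h0mem
  have hmeq : F₁ m = F₂ m := by
    have : F₁ m - F₂ m = 0 := hm
    linarith
  -- extract maximizers
  obtain ⟨p₁, hp₁s, hp₁eq⟩ := Finset.exists_mem_eq_sup' hs₁ (fun p : ℝ × ℝ => p.2 - m * p.1)
  obtain ⟨p₂, hp₂s, hp₂eq⟩ := Finset.exists_mem_eq_sup' hs₂ (fun p : ℝ × ℝ => p.2 - m * p.1)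
  have hp₁ : p₁ ∈ l₁ := (hmem₁ _).mp hp₁s
  have hp₂ : p₂ ∈ l₂ := (hmem₂ _).mp hp₂s
  refine ⟨p₁, hp₁, p₂, hp₂, ?_⟩
  have hd : 0 < p₂.1 - p₁.1 := by
    have := hX₁ p₁ hp₁
    have := hX₂ p₂ hp₂
    linarith
  have hc : p₁.2 - m * p₁.1 = p₂.2 - m * p₂.1 := by
    rw [← hp₁eq, ← hp₂eq, ← hF₁, ← hF₂] at *
    exact hmeq
  intro q hq
  have hqle : q.2 - m * q.1 ≤ p₁.2 - m * p₁.1 := by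
    rcases hq with hq | hq
    · have := Finset.le_sup' (fun p : ℝ × ℝ => p.2 - m * p.1) ((hmem₁ q).mpr hq)
      rw [← hp₁eq]
      exact this
    · have := Finset.le_sup' (fun p : ℝ × ℝ => p.2 - m * p.1) ((hmem₂ q).mpr hq)
      rw [hc, ← hp₂eq]
      exact this
  have heq : p₂.2 - p₁.2 = m * (p₂.1 - p₁.1) := by linarith
  have key : (p₂.1 - p₁.1) * (q.2 - p₁.2) - (p₂.2 - p₁.2) * (q.1 - p₁.1)
      = (p₂.1 - p₁.1) * ((q.2 - m * q.1) - (p₁.2 - m * p₁.1)) := by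
    linear_combination (p₁.1 - q.1) * heq
  unfold cross
  rw [key]
  exact mul_nonpos_of_nonneg_of_nonpos hd.le (by linarith)
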